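/- Let (X,Y) and (X',Y') be independent pairs of finitely supported random variables. For every point p in the tension region T(X,X'; Y,Y') there exist points q ∈ T(X;Y) and q' ∈ T(X';Y') with q + q' ≤ p coordinatewise. Hence the Minkowski sum T(X;Y) + T(X';Y') is a coordinatewise lower bound for T(XX';YY'). -/

import Mathlib

open Real BigOperators Finset

section Defs
variable {Ω : Type} [Fintype Ω]

/-- `p` is a probability mass function on the finite sample space `Ω`. -/
def IsPmf (p : Ω → ℝ) : Prop := (∀ ω, 0 ≤ p ω) ∧ ∑ ω, p ω = 1

/-- Distribution of the random variable `f` under `p`. -/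
noncomputable def distOf (p : Ω → ℝ) {α : Type} [Fintype α] [DecidableEq α]
    (f : Ω → α) : α → ℝ := fun a => ∑ ω, if f ω = a then p ω else 0

/-- Shannon entropy (in nats) of the random variable `f` under `p`. -/
noncomputable def ent (p : Ω → ℝ) {α : Type} [Fintype α] [DecidableEq α]
    (f : Ω → α) : ℝ := ∑ a, Real.negMulLog (distOf p f a)

/-- Mutual information `I(f;g)` under `p`. -/
noncomputable def mi (p : Ω → ℝ) {α β : Type} [Fintype α] [DecidableEq α]
    [Fintype β] [DecidableEq β] (f : Ω → α) (g : Ω → β) : ℝ :=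
  ent p f + ent p g - ent p (fun ω => (f ω, g ω))

/-- Conditional mutual information `I(f;g|h)` under `p`. -/
noncomputable def cmi (p : Ω → ℝ) {α β γ : Type} [Fintype α] [DecidableEq α]
    [Fintype β] [DecidableEq β] [Fintype γ] [DecidableEq γ]
    (f : Ω → α) (g : Ω → β) (h : Ω → γ) : ℝ :=
  ent p (fun ω => (f ω, h ω)) + ent p (fun ω => (g ω, h ω))
    - ent p (fun ω => (f ω, g ω, h ω)) - ent p h

end Defs



section Aux
variable {Ω : Type} [Fintype Ω] {α β γ : Type} [Fintype α] [DecidableEq α]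
  [Fintype β] [DecidableEq β] [Fintype γ] [DecidableEq γ]

lemma distOf_nonneg (p : Ω → ℝ) (hp : ∀ ω, 0 ≤ p ω) (f : Ω → α) (a : α) :
    0 ≤ distOf p f a := by
  apply Finset.sum_nonneg
  intro ω _
  split <;> simp [hp ω]

lemma sum_distOf (p : Ω → ℝ) (f : Ω → α) : ∑ a, distOf p f a = ∑ ω, p ω := by
  unfold distOf
  rw [Finset.sum_comm]
  refine Finset.sum_congr rfl fun ω _ => ?_
  simp

lemma distOf_distOf (p : Ω → ℝ) (f : Ω → α) (g : α → β) :
    distOf (distOf p f) g = distOf p (fun ω => g (f ω)) := by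
  funext b
  unfold distOf
  have key : ∀ a, (if g a = b then ∑ ω, if f ω = a then p ω else 0 else 0)
      = ∑ ω, if f ω = a then (if g (f ω) = b then p ω else 0) else 0 := by
    intro a
    by_cases h : g a = b
    · rw [if_pos h]
      refine Finset.sum_congr rfl fun ω _ => ?_
      by_cases hf : f ω = a
      · simp [hf, h]
      · simp [hf]
    · rw [if_neg h]
      refine (Finset.sum_eq_zero fun ω _ => ?_).symm
      by_cases hf : f ω = a
      · simp [hf, h]
      · simp [hf]
  rw [Finset.sum_congr rfl fun a _ => key a, Finset.sum_comm]
  refine Finset.sum_congr rfl fun ω _ => ?_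
  simp

lemma ent_distOf (p : Ω → ℝ) (f : Ω → α) (g : α → β) :
    ent (distOf p f) g = ent p (fun ω => g (f ω)) := by
  unfold ent
  rw [distOf_distOf]

lemma distOf_comp_eq {Ω' : Type} [Fintype Ω'] (p : Ω → ℝ) (p' : Ω' → ℝ)
    (f : Ω → α) (f' : Ω' → α) (hd : distOf p f = distOf p' f') (g : α → β) :
    distOf p (fun ω => g (f ω)) = distOf p' (fun ω => g (f' ω)) := by
  rw [← distOf_distOf p f g, ← distOf_distOf p' f' g, hd]

lemma ent_comp_eq {Ω' : Type} [Fintype Ω'] (p : Ω → ℝ) (p' : Ω' → ℝ)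
    (f : Ω → α) (f' : Ω' → α) (hd : distOf p f = distOf p' f') (g : α → β) :
    ent p (fun ω => g (f ω)) = ent p' (fun ω => g (f' ω)) := by
  unfold ent
  rw [distOf_comp_eq p p' f f' hd g]

lemma ent_comp_inj (p : Ω → ℝ) (f : Ω → α) (e : α → β) (he : Function.Injective e) :
    ent p (fun ω => e (f ω)) = ent p f := by
  unfold ent
  rw [← Finset.sum_subset (Finset.subset_univ (Finset.univ.image e))]
  · rw [Finset.sum_image (fun a _ b _ h => he h)]
    refine Finset.sum_congr rfl fun a _ => ?_
    congr 1
    unfold distOf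
    refine Finset.sum_congr rfl fun ω _ => ?_
    simp [he.eq_iff]
  · intro b _ hb
    have : distOf p (fun ω => e (f ω)) b = 0 := by
      unfold distOf
      apply Finset.sum_eq_zero
      intro ω _
      have : e (f ω) ≠ b := fun h => hb (Finset.mem_image.2 ⟨f ω, Finset.mem_univ _, h⟩)
      simp [this]
    simp [this, Real.negMulLog_zero]

lemma ent_congr (p : Ω → ℝ) (f : Ω → α) (g : Ω → β) (e : α → β)
    (he : Function.Injective e) (hfg : ∀ ω, g ω = e (f ω)) :
    ent p g = ent p f := by
  have : g = fun ω => e (f ω) := funext hfg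
  rw [this, ent_comp_inj p f e he]

end Aux

lemma key_step (u M N K : ℝ) (hu : 0 ≤ u) (hM : u ≤ M) (hN : u ≤ N) (hK : u ≤ K) :
    u * (Real.log M + Real.log N - Real.log u - Real.log K) ≤ M * N / K - u := by
  rcases eq_or_lt_of_le hu with h0 | h0
  · rw [← h0]
    have hM0 : 0 ≤ M := le_trans hu hM
    have hN0 : 0 ≤ N := le_trans hu hN
    have hK0 : 0 ≤ K := le_trans hu hK
    simp only [zero_mul, sub_zero]
    positivity
  · have hMpos : 0 < M := lt_of_lt_of_le h0 hM
    have hNpos : 0 < N := lt_of_lt_of_le h0 hN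
    have hKpos : 0 < K := lt_of_lt_of_le h0 hK
    have harg : 0 < M * N / (u * K) := by positivity
    have hlog : Real.log (M * N / (u * K)) ≤ M * N / (u * K) - 1 :=
      Real.log_le_sub_one_of_pos harg
    have hexp : Real.log (M * N / (u * K))
        = Real.log M + Real.log N - Real.log u - Real.log K := by
      rw [Real.log_div (by positivity) (by positivity), Real.log_mul hMpos.ne' hNpos.ne',
        Real.log_mul h0.ne' hKpos.ne']
      ring
    rw [← hexp]
    have hid : u * (M * N / (u * K)) = M * N / K := by
      field_simp
    calc u * Real.log (M * N / (u * K)) ≤ u * (M * N / (u * K) - 1) :=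
          mul_le_mul_of_nonneg_left hlog hu
      _ = M * N / K - u := by rw [mul_sub, hid, mul_one]

lemma negMulLog_sum {ι : Type} [Fintype ι] (f : ι → ℝ) :
    Real.negMulLog (∑ i, f i) = ∑ i, f i * (-(Real.log (∑ j, f j))) := by
  rw [Real.negMulLog, ← Finset.sum_mul]
  ring

lemma key2 {α β : Type} [Fintype α] [Fintype β]
    (s : α → β → ℝ) (hs : ∀ a b, 0 ≤ s a b) :
    (∑ a, ∑ b, Real.negMulLog (s a b)) + Real.negMulLog (∑ a, ∑ b, s a b)
      ≤ (∑ a, Real.negMulLog (∑ b, s a b)) + (∑ b, Real.negMulLog (∑ a, s a b)) := by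
  have hM0 : ∀ a, 0 ≤ ∑ b, s a b := fun a => Finset.sum_nonneg fun b _ => hs a b
  have hK0 : 0 ≤ ∑ a, ∑ b, s a b := Finset.sum_nonneg fun a _ => hM0 a
  set T : α → β → ℝ := fun a b =>
    s a b * (Real.log (∑ b', s a b') + Real.log (∑ a', s a' b)
      - Real.log (s a b) - Real.log (∑ a', ∑ b', s a' b')) with hTdef
  -- pointwise bound
  have hT : ∀ a b, T a b ≤ (∑ b', s a b') * (∑ a', s a' b) / (∑ a', ∑ b', s a' b') - s a b := by
    intro a b
    refine key_step (s a b) _ _ _ (hs a b) ?_ ?_ ?_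
    · exact Finset.single_le_sum (fun b' _ => hs a b') (Finset.mem_univ b)
    · exact Finset.single_le_sum (fun a' _ => hs a' b) (Finset.mem_univ a)
    · calc s a b ≤ ∑ b', s a b' :=
            Finset.single_le_sum (fun b' _ => hs a b') (Finset.mem_univ b)
        _ ≤ ∑ a', ∑ b', s a' b' :=
            Finset.single_le_sum (fun a' _ => hM0 a') (Finset.mem_univ a)
  have hsumT : ∑ a, ∑ b, T a b ≤ 0 := by
    have h1 : ∑ a, ∑ b, T a b
        ≤ ∑ a, ∑ b, ((∑ b', s a b') * (∑ a', s a' b) / (∑ a', ∑ b', s a' b') - s a b) :=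
      Finset.sum_le_sum fun a _ => Finset.sum_le_sum fun b _ => hT a b
    have hinner : ∀ a, ∑ b, ((∑ b', s a b') * (∑ a', s a' b) / (∑ a', ∑ b', s a' b') - s a b)
        = (∑ b', s a b') * (∑ a', ∑ b', s a' b') / (∑ a', ∑ b', s a' b') - (∑ b', s a b') := by
      intro a
      rw [Finset.sum_sub_distrib]
      congr 1
      rw [← Finset.sum_div, ← Finset.mul_sum]
      congr 2
      exact Finset.sum_comm
    have h2 : ∑ a, ∑ b, ((∑ b', s a b') * (∑ a', s a' b) / (∑ a', ∑ b', s a' b') - s a b) = 0 := by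
      rw [Finset.sum_congr rfl fun a _ => hinner a]
      rcases eq_or_ne (∑ a', ∑ b', s a' b') 0 with hK | hK
      · have hMa : ∀ a, (∑ b', s a b') = 0 := by
          intro a
          have := (Finset.sum_eq_zero_iff_of_nonneg (fun a' _ => hM0 a')).1 hK a (Finset.mem_univ a)
          exact this
        refine Finset.sum_eq_zero fun a _ => ?_
        rw [hMa a]
        simp
      · refine Finset.sum_eq_zero fun a _ => ?_
        rw [mul_div_assoc, div_self hK, mul_one, sub_self]
    linarith
  -- rewrite single sums as double sums
  have hR1 : ∑ a, Real.negMulLog (∑ b, s a b)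
      = ∑ a, ∑ b, (s a b * (-(Real.log (∑ b', s a b')))) :=
    Finset.sum_congr rfl fun a _ => negMulLog_sum (fun b => s a b)
  have hR2 : ∑ b, Real.negMulLog (∑ a, s a b)
      = ∑ a, ∑ b, (s a b * (-(Real.log (∑ a', s a' b)))) := by
    rw [Finset.sum_comm]
    exact Finset.sum_congr rfl fun b _ => negMulLog_sum (fun a => s a b)
  have hR3 : Real.negMulLog (∑ a, ∑ b, s a b)
      = ∑ a, ∑ b, (s a b * (-(Real.log (∑ a', ∑ b', s a' b')))) := by
    rw [negMulLog_sum (fun a => ∑ b, s a b)]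
    exact Finset.sum_congr rfl fun a _ => Finset.sum_mul _ _ _
  have hz : ∑ a, ∑ b, (s a b * (-(Real.log (∑ b', s a b')))
      + s a b * (-(Real.log (∑ a', s a' b)))
      - Real.negMulLog (s a b)
      - s a b * (-(Real.log (∑ a', ∑ b', s a' b'))) + T a b) = 0 := by
    refine Finset.sum_eq_zero fun a _ => Finset.sum_eq_zero fun b _ => ?_
    simp only [hTdef, Real.negMulLog]
    ring
  simp only [Finset.sum_add_distrib, Finset.sum_sub_distrib] at hz
  linarith

section CmiNonneg
variable {Ω : Type} [Fintype Ω] {α β γ : Type} [Fintype α] [DecidableEq α]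
  [Fintype β] [DecidableEq β] [Fintype γ] [DecidableEq γ]

lemma cmi_nonneg (p : Ω → ℝ) (hp : ∀ ω, 0 ≤ p ω) (f : Ω → α) (g : Ω → β) (h : Ω → γ) :
    0 ≤ cmi p f g h := by
  unfold cmi ent
  set r : α × β × γ → ℝ := distOf p (fun ω => (f ω, g ω, h ω)) with hrdef
  have hr : ∀ x, 0 ≤ r x := fun x => distOf_nonneg p hp _ x
  have h13 : distOf p (fun ω => (f ω, h ω)) = distOf r (fun x : α × β × γ => (x.1, x.2.2)) :=
    (distOf_distOf p (fun ω => (f ω, g ω, h ω)) (fun x => (x.1, x.2.2))).symm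
  have h23 : distOf p (fun ω => (g ω, h ω)) = distOf r (fun x : α × β × γ => (x.2.1, x.2.2)) :=
    (distOf_distOf p (fun ω => (f ω, g ω, h ω)) (fun x => (x.2.1, x.2.2))).symm
  have hh : distOf p h = distOf r (fun x : α × β × γ => x.2.2) :=
    (distOf_distOf p (fun ω => (f ω, g ω, h ω)) (fun x => x.2.2)).symm
  have hmarg13 : ∀ (a : α) (c : γ), distOf r (fun x : α × β × γ => (x.1, x.2.2)) (a, c)
      = ∑ b, r (a, b, c) := by
    intro a c
    show (∑ x : α × β × γ, if (x.1, x.2.2) = (a, c) then r x else 0) = _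
    simp only [Fintype.sum_prod_type]
    simp [Prod.ext_iff, ite_and, Finset.sum_ite_eq, Finset.sum_ite_eq']
  have hmarg23 : ∀ (b : β) (c : γ), distOf r (fun x : α × β × γ => (x.2.1, x.2.2)) (b, c)
      = ∑ a, r (a, b, c) := by
    intro b c
    show (∑ x : α × β × γ, if (x.2.1, x.2.2) = (b, c) then r x else 0) = _
    simp only [Fintype.sum_prod_type]
    simp [Prod.ext_iff, ite_and, Finset.sum_ite_eq, Finset.sum_ite_eq']
  have hmarg3 : ∀ (c : γ), distOf r (fun x : α × β × γ => x.2.2) c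
      = ∑ a, ∑ b, r (a, b, c) := by
    intro c
    show (∑ x : α × β × γ, if x.2.2 = c then r x else 0) = _
    simp only [Fintype.sum_prod_type]
    simp [Finset.sum_ite_eq, Finset.sum_ite_eq']
  have E13 : ∑ x : α × γ, Real.negMulLog (distOf p (fun ω => (f ω, h ω)) x)
      = ∑ c, ∑ a, Real.negMulLog (∑ b, r (a, b, c)) := by
    rw [h13, Fintype.sum_prod_type, Finset.sum_comm]
    exact Finset.sum_congr rfl fun c _ => Finset.sum_congr rfl fun a _ => by rw [hmarg13]
  have E23 : ∑ x : β × γ, Real.negMulLog (distOf p (fun ω => (g ω, h ω)) x)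
      = ∑ c, ∑ b, Real.negMulLog (∑ a, r (a, b, c)) := by
    rw [h23, Fintype.sum_prod_type, Finset.sum_comm]
    exact Finset.sum_congr rfl fun c _ => Finset.sum_congr rfl fun b _ => by rw [hmarg23]
  have E3 : ∑ c, Real.negMulLog (distOf p h c)
      = ∑ c, Real.negMulLog (∑ a, ∑ b, r (a, b, c)) := by
    rw [hh]
    exact Finset.sum_congr rfl fun c _ => by rw [hmarg3]
  have E123 : ∑ x : α × β × γ, Real.negMulLog (r x)
      = ∑ c, ∑ a, ∑ b, Real.negMulLog (r (a, b, c)) := by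
    simp only [Fintype.sum_prod_type]
    rw [Finset.sum_congr rfl fun (a : α) (_ : a ∈ Finset.univ) =>
      Finset.sum_comm (f := fun (b : β) (c : γ) => Real.negMulLog (r (a, b, c)))]
    rw [Finset.sum_comm]
  rw [E13, E23, E3, E123]
  have hkey : ∀ c : γ, 0 ≤ (∑ a, Real.negMulLog (∑ b, r (a, b, c)))
      + (∑ b, Real.negMulLog (∑ a, r (a, b, c)))
      - ((∑ a, ∑ b, Real.negMulLog (r (a, b, c)))
        + Real.negMulLog (∑ a, ∑ b, r (a, b, c))) :=
    fun c => sub_nonneg.2 (key2 (fun a b => r (a, b, c)) (fun a b => hr (a, b, c)))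
  have hs := Finset.sum_nonneg (fun c (_ : c ∈ Finset.univ) => hkey c)
  simp only [Finset.sum_sub_distrib, Finset.sum_add_distrib] at hs
  linarith

lemma mi_nonneg (p : Ω → ℝ) (hp : ∀ ω, 0 ≤ p ω) (hp1 : ∑ ω, p ω = 1)
    (f : Ω → α) (g : Ω → β) : 0 ≤ mi p f g := by
  have h0 := cmi_nonneg p hp f g (fun _ => (0 : Fin 1))
  unfold cmi at h0
  unfold mi
  have e1 : ent p (fun ω => (f ω, (0 : Fin 1))) = ent p f :=
    ent_comp_inj p f (fun a => (a, (0 : Fin 1)))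
      (fun a b hab => congrArg Prod.fst hab)
  have e2 : ent p (fun ω => (g ω, (0 : Fin 1))) = ent p g :=
    ent_comp_inj p g (fun a => (a, (0 : Fin 1)))
      (fun a b hab => congrArg Prod.fst hab)
  have e3 : ent p (fun ω => (f ω, g ω, (0 : Fin 1))) = ent p (fun ω => (f ω, g ω)) :=
    ent_congr p (fun ω => (f ω, g ω)) _ (fun x => (x.1, x.2, (0 : Fin 1)))
      (Function.LeftInverse.injective (g := fun y => (y.1, y.2.1)) fun x => rfl)
      (fun ω => rfl)
  have e4 : ent p (fun _ : Ω => (0 : Fin 1)) = 0 := by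
    unfold ent distOf
    simp [hp1]
  rw [e1, e2, e3, e4] at h0
  linarith

end CmiNonneg

section MoreAux
variable {Ω : Type} [Fintype Ω] {α β γ δ : Type} [Fintype α] [DecidableEq α]
  [Fintype β] [DecidableEq β] [Fintype γ] [DecidableEq γ] [Fintype δ] [DecidableEq δ]

lemma isPmf_distOf (p : Ω → ℝ) (hp : IsPmf p) (f : Ω → α) : IsPmf (distOf p f) :=
  ⟨distOf_nonneg p hp.1 f, by rw [sum_distOf, hp.2]⟩

lemma cmi_distOf [DecidableEq Ω] {Ω' : Type} [Fintype Ω'] (p : Ω' → ℝ) (pr : Ω' → Ω)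
    (f : Ω → α) (g : Ω → β) (h : Ω → γ) :
    cmi (distOf p pr) f g h
      = cmi p (fun ω => f (pr ω)) (fun ω => g (pr ω)) (fun ω => h (pr ω)) := by
  unfold cmi
  rw [ent_distOf, ent_distOf, ent_distOf, ent_distOf]

lemma inj_pair_left (e : α → γ) (he : Function.Injective e) :
    Function.Injective (fun x : α × β => (e x.1, x.2)) := by
  intro x y hxy
  simp only [Prod.mk.injEq] at hxy
  exact Prod.ext (he hxy.1) hxy.2

lemma inj_pair_right (e : β → γ) (he : Function.Injective e) :
    Function.Injective (fun x : α × β => (x.1, e x.2)) := by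
  intro x y hxy
  simp only [Prod.mk.injEq] at hxy
  exact Prod.ext hxy.1 (he hxy.2)

lemma cmi_map_middle (p : Ω → ℝ) (f : Ω → α) (g : Ω → β) (h : Ω → γ)
    (e : β → δ) (he : Function.Injective e) :
    cmi p f (fun ω => e (g ω)) h = cmi p f g h := by
  unfold cmi
  have h1 : ent p (fun ω => (e (g ω), h ω)) = ent p (fun ω => (g ω, h ω)) :=
    ent_congr p _ _ (fun x => (e x.1, x.2)) (inj_pair_left e he) (fun ω => rfl)
  have h2 : ent p (fun ω => (f ω, e (g ω), h ω)) = ent p (fun ω => (f ω, g ω, h ω)) :=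
    ent_congr p _ _ (fun x : α × β × γ => (x.1, e x.2.1, x.2.2))
      (inj_pair_right _ (inj_pair_left e he)) (fun ω => rfl)
  rw [h1, h2]

lemma cmi_map_last (p : Ω → ℝ) (f : Ω → α) (g : Ω → β) (h : Ω → γ)
    (e : γ → δ) (he : Function.Injective e) :
    cmi p f g (fun ω => e (h ω)) = cmi p f g h := by
  unfold cmi
  have h1 : ent p (fun ω => (f ω, e (h ω))) = ent p (fun ω => (f ω, h ω)) :=
    ent_congr p _ _ (fun x => (x.1, e x.2)) (inj_pair_right e he) (fun ω => rfl)
  have h2 : ent p (fun ω => (g ω, e (h ω))) = ent p (fun ω => (g ω, h ω)) :=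
    ent_congr p _ _ (fun x => (x.1, e x.2)) (inj_pair_right e he) (fun ω => rfl)
  have h3 : ent p (fun ω => (f ω, g ω, e (h ω))) = ent p (fun ω => (f ω, g ω, h ω)) :=
    ent_congr p _ _ (fun x : α × β × γ => (x.1, x.2.1, e x.2.2))
      (inj_pair_right _ (inj_pair_right e he)) (fun ω => rfl)
  have h4 : ent p (fun ω => e (h ω)) = ent p h := ent_comp_inj p h e he
  rw [h1, h2, h3, h4]

end MoreAux

/-- Tension region of `(X,Y)`: the set of triples
`(I(X;Z|Y), I(Y;Z|X), I(X;Y|Z))` as `Z` ranges over all finitely supported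
random variables jointly distributed with `(X,Y)`. -/
def tension {Ω : Type} [Fintype Ω] {α β : Type} [Fintype α] [DecidableEq α]
    [Fintype β] [DecidableEq β] (p : Ω → ℝ) (X : Ω → α) (Y : Ω → β) :
    Set (ℝ × ℝ × ℝ) :=
  { t | ∃ (m : ℕ) (q : α × β × Fin m → ℝ), IsPmf q ∧
      distOf q (fun w => (w.1, w.2.1)) = distOf p (fun ω => (X ω, Y ω)) ∧
      t = (cmi q (fun w => w.1) (fun w => w.2.2) (fun w => w.2.1),
           cmi q (fun w => w.2.1) (fun w => w.2.2) (fun w => w.1),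
           cmi q (fun w => w.1) (fun w => w.2.1) (fun w => w.2.2)) }

/-- If `(X,Y)` and `(X',Y')` are independent, then every point of the tension
region `T(XX';YY')` dominates (coordinatewise) a sum of a point of `T(X;Y)`
and a point of `T(X';Y')`. -/
theorem stmt11 {Ω α β α' β' : Type} [Fintype Ω]
    [Fintype α] [DecidableEq α] [Fintype β] [DecidableEq β]
    [Fintype α'] [DecidableEq α'] [Fintype β'] [DecidableEq β']
    (p : Ω → ℝ) (hp : IsPmf p)
    (X : Ω → α) (Y : Ω → β) (X' : Ω → α') (Y' : Ω → β')
    (hind : mi p (fun ω => (X ω, Y ω)) (fun ω => (X' ω, Y' ω)) = 0) :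
    ∀ t ∈ tension p (fun ω => (X ω, X' ω)) (fun ω => (Y ω, Y' ω)),
      ∃ u ∈ tension p X Y, ∃ u' ∈ tension p X' Y',
        u.1 + u'.1 ≤ t.1 ∧ u.2.1 + u'.2.1 ≤ t.2.1 ∧ u.2.2 + u'.2.2 ≤ t.2.2 := by
  rintro t ⟨m, q, hq, hmarg, rfl⟩
  set E : α × β × Fin m ≃ Fin (Fintype.card (α × β × Fin m)) :=
    Fintype.equivFin (α × β × Fin m) with hE
  -- nonnegativity facts
  have F1 : 0 ≤ cmi q (fun w => w.1.1) (fun w => w.2.1.2) (fun w => (w.2.1.1, w.2.2)) :=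
    cmi_nonneg q hq.1 _ _ _
  have F1' : 0 ≤ cmi q (fun w => w.2.1.1) (fun w => w.1.2) (fun w => (w.1.1, w.2.2)) :=
    cmi_nonneg q hq.1 _ _ _
  have F2 : 0 ≤ mi q (fun w => w.2.1.1) (fun w => w.2.1.2) := mi_nonneg q hq.1 hq.2 _ _
  have F2' : 0 ≤ mi q (fun w => w.1.1) (fun w => w.1.2) := mi_nonneg q hq.1 hq.2 _ _
  -- independence transferred to q
  have ha : ent q (fun w => (w.1.1, w.2.1.1)) = ent p (fun ω => (X ω, Y ω)) :=
    ent_comp_eq q p _ _ hmarg (fun x => (x.1.1, x.2.1))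
  have hb : ent q (fun w => (w.1.2, w.2.1.2)) = ent p (fun ω => (X' ω, Y' ω)) :=
    ent_comp_eq q p _ _ hmarg (fun x => (x.1.2, x.2.2))
  have hc : ent q (fun w => ((w.1.1, w.2.1.1), (w.1.2, w.2.1.2)))
      = ent p (fun ω => ((X ω, Y ω), (X' ω, Y' ω))) :=
    ent_comp_eq q p _ _ hmarg (fun x => ((x.1.1, x.2.1), (x.1.2, x.2.2)))
  unfold mi at hind
  have hqind : ent q (fun w => (w.1.1, w.2.1.1)) + ent q (fun w => (w.1.2, w.2.1.2))
      - ent q (fun w => ((w.1.1, w.2.1.1), (w.1.2, w.2.1.2))) = 0 := by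
    rw [ha, hb, hc]
    linarith [hind]
  -- expansions of the cmi / mi facts (definitional)
  have hexpF1 : cmi q (fun w => w.1.1) (fun w => w.2.1.2) (fun w => (w.2.1.1, w.2.2))
      = ent q (fun w => (w.1.1, (w.2.1.1, w.2.2)))
        + ent q (fun w => (w.2.1.2, (w.2.1.1, w.2.2)))
        - ent q (fun w => (w.1.1, (w.2.1.2, (w.2.1.1, w.2.2))))
        - ent q (fun w => (w.2.1.1, w.2.2)) := rfl
  have hexpF1' : cmi q (fun w => w.2.1.1) (fun w => w.1.2) (fun w => (w.1.1, w.2.2))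
      = ent q (fun w => (w.2.1.1, (w.1.1, w.2.2)))
        + ent q (fun w => (w.1.2, (w.1.1, w.2.2)))
        - ent q (fun w => (w.2.1.1, (w.1.2, (w.1.1, w.2.2))))
        - ent q (fun w => (w.1.1, w.2.2)) := rfl
  have hexpF2 : mi q (fun w => w.2.1.1) (fun w => w.2.1.2)
      = ent q (fun w => w.2.1.1) + ent q (fun w => w.2.1.2)
        - ent q (fun w => (w.2.1.1, w.2.1.2)) := rfl
  have hexpF2' : mi q (fun w => w.1.1) (fun w => w.1.2)
      = ent q (fun w => w.1.1) + ent q (fun w => w.1.2)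
        - ent q (fun w => (w.1.1, w.1.2)) := rfl
  refine ⟨_, ⟨m, distOf q (fun w => (w.1.1, w.2.1.1, w.2.2)), isPmf_distOf q hq _, ?_, rfl⟩,
          _, ⟨Fintype.card (α × β × Fin m),
              distOf q (fun w => (w.1.2, w.2.1.2, E (w.1.1, w.2.1.1, w.2.2))),
              isPmf_distOf q hq _, ?_, rfl⟩, ?_, ?_, ?_⟩
  · -- marginal for (X,Y)
    rw [distOf_distOf]
    exact distOf_comp_eq q p _ _ hmarg (fun x => (x.1.1, x.2.1))
  · -- marginal for (X',Y')
    rw [distOf_distOf]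
    exact distOf_comp_eq q p _ _ hmarg (fun x => (x.1.2, x.2.2))
  · -- first coordinate inequality
    dsimp only
    have hu1 : cmi (distOf q (fun w => (w.1.1, w.2.1.1, w.2.2)))
        (fun w => w.1) (fun w => w.2.2) (fun w => w.2.1)
        = cmi q (fun w => w.1.1) (fun w => w.2.2) (fun w => w.2.1.1) :=
      cmi_distOf q _ _ _ _
    have hv1 : cmi (distOf q (fun w => (w.1.2, w.2.1.2, E (w.1.1, w.2.1.1, w.2.2))))
        (fun w => w.1) (fun w => w.2.2) (fun w => w.2.1)
        = cmi q (fun w => w.1.2) (fun w => E (w.1.1, w.2.1.1, w.2.2)) (fun w => w.2.1.2) :=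
      cmi_distOf q _ _ _ _
    have hs1 : cmi q (fun w => w.1.2) (fun w => E (w.1.1, w.2.1.1, w.2.2)) (fun w => w.2.1.2)
        = cmi q (fun w => w.1.2) (fun w => (w.1.1, w.2.1.1, w.2.2)) (fun w => w.2.1.2) :=
      cmi_map_middle q _ _ _ E E.injective
    have hexpL1 : cmi q (fun w => w.1.1) (fun w => w.2.2) (fun w => w.2.1.1)
        = ent q (fun w => (w.1.1, w.2.1.1)) + ent q (fun w => (w.2.2, w.2.1.1))
          - ent q (fun w => (w.1.1, (w.2.2, w.2.1.1))) - ent q (fun w => w.2.1.1) := rfl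
    have hexpL2 : cmi q (fun w => w.1.2) (fun w => (w.1.1, w.2.1.1, w.2.2)) (fun w => w.2.1.2)
        = ent q (fun w => (w.1.2, w.2.1.2))
          + ent q (fun w => ((w.1.1, w.2.1.1, w.2.2), w.2.1.2))
          - ent q (fun w => (w.1.2, ((w.1.1, w.2.1.1, w.2.2), w.2.1.2)))
          - ent q (fun w => w.2.1.2) := rfl
    have hexpR : cmi q (fun w => w.1) (fun w => w.2.2) (fun w => w.2.1)
        = ent q (fun w => (w.1, w.2.1)) + ent q (fun w => (w.2.2, w.2.1))
          - ent q (fun w => (w.1, (w.2.2, w.2.1))) - ent q (fun w => w.2.1) := rfl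
    have eq1 : ent q (fun w => (w.2.2, w.2.1.1)) = ent q (fun w => (w.2.1.1, w.2.2)) :=
      ent_congr q _ _ (fun x => (x.2, x.1))
        (Function.LeftInverse.injective (g := fun x => (x.2, x.1)) fun x => rfl) (fun w => rfl)
    have eq2 : ent q (fun w => (w.1.1, (w.2.2, w.2.1.1)))
        = ent q (fun w => (w.1.1, (w.2.1.1, w.2.2))) :=
      ent_congr q _ _ (fun x => (x.1, (x.2.2, x.2.1)))
        (Function.LeftInverse.injective (g := fun x => (x.1, (x.2.2, x.2.1))) fun x => rfl)
        (fun w => rfl)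
    have eq3 : ent q (fun w => ((w.1.1, w.2.1.1, w.2.2), w.2.1.2))
        = ent q (fun w => (w.1.1, (w.2.1.2, (w.2.1.1, w.2.2)))) :=
      ent_congr q _ _ (fun x => ((x.1, x.2.2.1, x.2.2.2), x.2.1))
        (Function.LeftInverse.injective
          (g := fun y => (y.1.1, (y.2, (y.1.2.1, y.1.2.2)))) fun x => rfl)
        (fun w => rfl)
    have eq4 : ent q (fun w => (w.1.2, ((w.1.1, w.2.1.1, w.2.2), w.2.1.2)))
        = ent q (fun w => (w.1, (w.2.2, w.2.1))) :=
      ent_congr q _ _ (fun x => (x.1.2, ((x.1.1, x.2.2.1, x.2.1), x.2.2.2)))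
        (Function.LeftInverse.injective
          (g := fun y => ((y.2.1.1, y.1), (y.2.1.2.2, (y.2.1.2.1, y.2.2)))) fun x => rfl)
        (fun w => rfl)
    have eq5 : ent q (fun w => ((w.1.1, w.2.1.1), (w.1.2, w.2.1.2)))
        = ent q (fun w => (w.1, w.2.1)) :=
      ent_congr q _ _ (fun x => ((x.1.1, x.2.1), (x.1.2, x.2.2)))
        (Function.LeftInverse.injective
          (g := fun y => ((y.1.1, y.2.1), (y.1.2, y.2.2))) fun x => rfl)
        (fun w => rfl)
    have eq6 : ent q (fun w => (w.2.1.2, (w.2.1.1, w.2.2))) = ent q (fun w => (w.2.2, w.2.1)) :=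
      ent_congr q _ _ (fun x => (x.2.2, (x.2.1, x.1)))
        (Function.LeftInverse.injective
          (g := fun y => (y.2.2, (y.2.1, y.1))) fun x => rfl)
        (fun w => rfl)
    have eq7 : ent q (fun w => (w.2.1.1, w.2.1.2)) = ent q (fun w => w.2.1) := rfl
    linarith [hu1, hv1, hs1, hexpL1, hexpL2, hexpR, hexpF1, hexpF2, F1, F2, hqind,
      eq1, eq2, eq3, eq4, eq5, eq6, eq7]
  · -- second coordinate inequality
    dsimp only
    have hu2 : cmi (distOf q (fun w => (w.1.1, w.2.1.1, w.2.2)))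
        (fun w => w.2.1) (fun w => w.2.2) (fun w => w.1)
        = cmi q (fun w => w.2.1.1) (fun w => w.2.2) (fun w => w.1.1) :=
      cmi_distOf q _ _ _ _
    have hv2 : cmi (distOf q (fun w => (w.1.2, w.2.1.2, E (w.1.1, w.2.1.1, w.2.2))))
        (fun w => w.2.1) (fun w => w.2.2) (fun w => w.1)
        = cmi q (fun w => w.2.1.2) (fun w => E (w.1.1, w.2.1.1, w.2.2)) (fun w => w.1.2) :=
      cmi_distOf q _ _ _ _
    have hs2 : cmi q (fun w => w.2.1.2) (fun w => E (w.1.1, w.2.1.1, w.2.2)) (fun w => w.1.2)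
        = cmi q (fun w => w.2.1.2) (fun w => (w.1.1, w.2.1.1, w.2.2)) (fun w => w.1.2) :=
      cmi_map_middle q _ _ _ E E.injective
    have hexpL1 : cmi q (fun w => w.2.1.1) (fun w => w.2.2) (fun w => w.1.1)
        = ent q (fun w => (w.2.1.1, w.1.1)) + ent q (fun w => (w.2.2, w.1.1))
          - ent q (fun w => (w.2.1.1, (w.2.2, w.1.1))) - ent q (fun w => w.1.1) := rfl
    have hexpL2 : cmi q (fun w => w.2.1.2) (fun w => (w.1.1, w.2.1.1, w.2.2)) (fun w => w.1.2)
        = ent q (fun w => (w.2.1.2, w.1.2))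
          + ent q (fun w => ((w.1.1, w.2.1.1, w.2.2), w.1.2))
          - ent q (fun w => (w.2.1.2, ((w.1.1, w.2.1.1, w.2.2), w.1.2)))
          - ent q (fun w => w.1.2) := rfl
    have hexpR : cmi q (fun w => w.2.1) (fun w => w.2.2) (fun w => w.1)
        = ent q (fun w => (w.2.1, w.1)) + ent q (fun w => (w.2.2, w.1))
          - ent q (fun w => (w.2.1, (w.2.2, w.1))) - ent q (fun w => w.1) := rfl
    have f1 : ent q (fun w => (w.2.2, w.1.1)) = ent q (fun w => (w.1.1, w.2.2)) :=
      ent_congr q _ _ (fun x => (x.2, x.1))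
        (Function.LeftInverse.injective (g := fun x => (x.2, x.1)) fun x => rfl) (fun w => rfl)
    have f2 : ent q (fun w => (w.2.1.1, (w.2.2, w.1.1)))
        = ent q (fun w => (w.2.1.1, (w.1.1, w.2.2))) :=
      ent_congr q _ _ (fun x => (x.1, (x.2.2, x.2.1)))
        (Function.LeftInverse.injective (g := fun x => (x.1, (x.2.2, x.2.1))) fun x => rfl)
        (fun w => rfl)
    have f3 : ent q (fun w => ((w.1.1, w.2.1.1, w.2.2), w.1.2))
        = ent q (fun w => (w.2.1.1, (w.1.2, (w.1.1, w.2.2)))) :=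
      ent_congr q _ _ (fun x => ((x.2.2.1, x.1, x.2.2.2), x.2.1))
        (Function.LeftInverse.injective
          (g := fun y => (y.1.2.1, (y.2, (y.1.1, y.1.2.2)))) fun x => rfl)
        (fun w => rfl)
    have f4 : ent q (fun w => (w.2.1.2, ((w.1.1, w.2.1.1, w.2.2), w.1.2)))
        = ent q (fun w => (w.2.1, (w.2.2, w.1))) :=
      ent_congr q _ _ (fun x => (x.1.2, ((x.2.2.1, x.1.1, x.2.1), x.2.2.2)))
        (Function.LeftInverse.injective
          (g := fun y => ((y.2.1.2.1, y.1), (y.2.1.2.2, (y.2.1.1, y.2.2)))) fun x => rfl)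
        (fun w => rfl)
    have f5 : ent q (fun w => ((w.1.1, w.2.1.1), (w.1.2, w.2.1.2)))
        = ent q (fun w => (w.2.1, w.1)) :=
      ent_congr q _ _ (fun x => ((x.2.1, x.1.1), (x.2.2, x.1.2)))
        (Function.LeftInverse.injective
          (g := fun y => ((y.1.2, y.2.2), (y.1.1, y.2.1))) fun x => rfl)
        (fun w => rfl)
    have f6 : ent q (fun w => (w.1.2, (w.1.1, w.2.2))) = ent q (fun w => (w.2.2, w.1)) :=
      ent_congr q _ _ (fun x => (x.2.2, (x.2.1, x.1)))
        (Function.LeftInverse.injective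
          (g := fun y => (y.2.2, (y.2.1, y.1))) fun x => rfl)
        (fun w => rfl)
    have f7 : ent q (fun w => (w.1.1, w.1.2)) = ent q (fun w => w.1) := rfl
    have f8 : ent q (fun w => (w.2.1.1, w.1.1)) = ent q (fun w => (w.1.1, w.2.1.1)) :=
      ent_congr q _ _ (fun x => (x.2, x.1))
        (Function.LeftInverse.injective (g := fun x => (x.2, x.1)) fun x => rfl) (fun w => rfl)
    have f9 : ent q (fun w => (w.2.1.2, w.1.2)) = ent q (fun w => (w.1.2, w.2.1.2)) :=
      ent_congr q _ _ (fun x => (x.2, x.1))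
        (Function.LeftInverse.injective (g := fun x => (x.2, x.1)) fun x => rfl) (fun w => rfl)
    linarith [hu2, hv2, hs2, hexpL1, hexpL2, hexpR, hexpF1', hexpF2', F1', F2', hqind,
      f1, f2, f3, f4, f5, f6, f7, f8, f9]
  · -- third coordinate inequality
    dsimp only
    have hu3 : cmi (distOf q (fun w => (w.1.1, w.2.1.1, w.2.2)))
        (fun w => w.1) (fun w => w.2.1) (fun w => w.2.2)
        = cmi q (fun w => w.1.1) (fun w => w.2.1.1) (fun w => w.2.2) :=
      cmi_distOf q _ _ _ _
    have hv3 : cmi (distOf q (fun w => (w.1.2, w.2.1.2, E (w.1.1, w.2.1.1, w.2.2))))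
        (fun w => w.1) (fun w => w.2.1) (fun w => w.2.2)
        = cmi q (fun w => w.1.2) (fun w => w.2.1.2) (fun w => E (w.1.1, w.2.1.1, w.2.2)) :=
      cmi_distOf q _ _ _ _
    have hs3 : cmi q (fun w => w.1.2) (fun w => w.2.1.2) (fun w => E (w.1.1, w.2.1.1, w.2.2))
        = cmi q (fun w => w.1.2) (fun w => w.2.1.2) (fun w => (w.1.1, w.2.1.1, w.2.2)) :=
      cmi_map_last q _ _ _ E E.injective
    have hexpL1 : cmi q (fun w => w.1.1) (fun w => w.2.1.1) (fun w => w.2.2)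
        = ent q (fun w => (w.1.1, w.2.2)) + ent q (fun w => (w.2.1.1, w.2.2))
          - ent q (fun w => (w.1.1, (w.2.1.1, w.2.2))) - ent q (fun w => w.2.2) := rfl
    have hexpL2 : cmi q (fun w => w.1.2) (fun w => w.2.1.2) (fun w => (w.1.1, w.2.1.1, w.2.2))
        = ent q (fun w => (w.1.2, (w.1.1, w.2.1.1, w.2.2)))
          + ent q (fun w => (w.2.1.2, (w.1.1, w.2.1.1, w.2.2)))
          - ent q (fun w => (w.1.2, (w.2.1.2, (w.1.1, w.2.1.1, w.2.2))))
          - ent q (fun w => (w.1.1, w.2.1.1, w.2.2)) := rfl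
    have hexpR : cmi q (fun w => w.1) (fun w => w.2.1) (fun w => w.2.2)
        = ent q (fun w => (w.1, w.2.2)) + ent q (fun w => (w.2.1, w.2.2))
          - ent q (fun w => (w.1, (w.2.1, w.2.2))) - ent q (fun w => w.2.2) := rfl
    have g1 : ent q (fun w => (w.1.2, (w.1.1, w.2.1.1, w.2.2)))
        = ent q (fun w => (w.2.1.1, (w.1.2, (w.1.1, w.2.2)))) :=
      ent_congr q _ _ (fun x => (x.2.1, (x.2.2.1, x.1, x.2.2.2)))
        (Function.LeftInverse.injective
          (g := fun y => (y.2.2.1, (y.1, (y.2.1, y.2.2.2)))) fun x => rfl)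
        (fun w => rfl)
    have g2 : ent q (fun w => (w.2.1.2, (w.1.1, w.2.1.1, w.2.2)))
        = ent q (fun w => (w.1.1, (w.2.1.2, (w.2.1.1, w.2.2)))) :=
      ent_congr q _ _ (fun x => (x.2.1, (x.1, x.2.2)))
        (Function.LeftInverse.injective
          (g := fun y => (y.2.1, (y.1, y.2.2))) fun x => rfl)
        (fun w => rfl)
    have g3 : ent q (fun w => (w.1.2, (w.2.1.2, (w.1.1, w.2.1.1, w.2.2))))
        = ent q (fun w => (w.1, (w.2.1, w.2.2))) :=
      ent_congr q _ _ (fun x => (x.1.2, (x.2.1.2, (x.1.1, x.2.1.1, x.2.2))))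
        (Function.LeftInverse.injective
          (g := fun y => ((y.2.2.1, y.1), ((y.2.2.2.1, y.2.1), y.2.2.2.2))) fun x => rfl)
        (fun w => rfl)
    have g4 : ent q (fun w => (w.1.2, (w.1.1, w.2.2))) = ent q (fun w => (w.1, w.2.2)) :=
      ent_congr q _ _ (fun x => (x.1.2, (x.1.1, x.2)))
        (Function.LeftInverse.injective
          (g := fun y => ((y.2.1, y.1), y.2.2)) fun x => rfl)
        (fun w => rfl)
    have g5 : ent q (fun w => (w.2.1.2, (w.2.1.1, w.2.2))) = ent q (fun w => (w.2.1, w.2.2)) :=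
      ent_congr q _ _ (fun x => (x.1.2, (x.1.1, x.2)))
        (Function.LeftInverse.injective
          (g := fun y => ((y.2.1, y.1), y.2.2)) fun x => rfl)
        (fun w => rfl)
    have g6 : ent q (fun w => (w.2.1.1, (w.1.1, w.2.2)))
        = ent q (fun w => (w.1.1, (w.2.1.1, w.2.2))) :=
      ent_congr q _ _ (fun x => (x.2.1, (x.1, x.2.2)))
        (Function.LeftInverse.injective
          (g := fun y => (y.2.1, (y.1, y.2.2))) fun x => rfl)
        (fun w => rfl)
    linarith [hu3, hv3, hs3, hexpL1, hexpL2, hexpR, hexpF1, hexpF1', F1, F1',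
      g1, g2, g3, g4, g5, g6]
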